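/- arXiv:2203.04215 — 4 statements merged into one kernel-verified Lean document; each statement's English description precedes it below -/
import Mathlib

section
/- If A is an eventually positive matrix (there exists t0 such that A^t has all entries strictly positive for all integers t ≥ t0), then any strictly positive eigenvector of A is a scalar multiple of the right Perron eigenvector associated with the spectral radius ρ(A). -/
open Matrix Filter Polynomial Topology

noncomputable section

/-- Complexification of a real matrix. -/
def cmat {n : ℕ} (A : Matrix (Fin n) (Fin n) ℝ) : Matrix (Fin n) (Fin n) ℂ :=
  A.map (algebraMap ℝ ℂ)

/-- `A` is eventually positive: all sufficiently large powers are entrywise positive. -/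
def EvPos {n : ℕ} (A : Matrix (Fin n) (Fin n) ℝ) : Prop :=
  ∃ t0 : ℕ, ∀ t ≥ t0, ∀ i j, 0 < (A ^ t) i j

/-- `A` is eventually exponentially positive: `e^{At}` is entrywise positive for all large `t`. -/
def EvExpPos {n : ℕ} (A : Matrix (Fin n) (Fin n) ℝ) : Prop :=
  ∃ t0 : ℝ, 0 ≤ t0 ∧ ∀ t ≥ t0, ∀ i j, 0 < (NormedSpace.exp (t • A)) i j

/-- Spectral radius of a real matrix, via its complex spectrum. -/
def specRad {n : ℕ} (A : Matrix (Fin n) (Fin n) ℝ) : ℝ :=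
  sSup ((fun z : ℂ => ‖z‖) '' spectrum ℂ (cmat A))

/-- `μ` is a simple eigenvalue of `A`: it has multiplicity one as a root of the
characteristic polynomial. -/
def SimpleEig {n : ℕ} (A : Matrix (Fin n) (Fin n) ℝ) (μ : ℂ) : Prop :=
  (Matrix.charpoly (cmat A)).roots.count μ = 1

/-- Marginal (continuous-time) stability: every eigenvalue has nonpositive real part, and
eigenvalues on the imaginary axis are simple roots of the minimal polynomial. -/
def MarginallyStable {n : ℕ} (A : Matrix (Fin n) (Fin n) ℝ) : Prop :=
  ∀ μ ∈ spectrum ℂ (cmat A), μ.re ≤ 0 ∧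
    (μ.re = 0 → Polynomial.rootMultiplicity μ (minpoly ℂ (cmat A)) = 1)

/-- Marginal Schur stability: every eigenvalue has modulus at most one, and eigenvalues of
modulus one are simple roots of the minimal polynomial. -/
def MarginallySchurStable {n : ℕ} (A : Matrix (Fin n) (Fin n) ℝ) : Prop :=
  ∀ μ ∈ spectrum ℂ (cmat A), ‖μ‖ ≤ 1 ∧
    (‖μ‖ = 1 → Polynomial.rootMultiplicity μ (minpoly ℂ (cmat A)) = 1)

/-- Irreducibility: no nontrivial proper index subset `S` with `A i j = 0` for all
`i ∈ S`, `j ∉ S` (equivalently, no permutation puts `A` in block triangular form). -/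
def MatIrreducible {n : ℕ} (A : Matrix (Fin n) (Fin n) ℝ) : Prop :=
  ¬ ∃ S : Finset (Fin n), S.Nonempty ∧ S ≠ Finset.univ ∧ ∀ i ∈ S, ∀ j ∉ S, A i j = 0

/-- The all-ones vector. -/
def ones (n : ℕ) : Fin n → ℝ := fun _ => 1


lemma pow_eig {n : ℕ} (A : Matrix (Fin n) (Fin n) ℝ) (v : Fin n → ℝ) (μ : ℝ)
    (h : A *ᵥ v = μ • v) (t : ℕ) : (A ^ t) *ᵥ v = μ ^ t • v := by
  induction t with
  | zero => simp
  | succ t ih =>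
    rw [pow_succ', ← Matrix.mulVec_mulVec, ih, Matrix.mulVec_smul, h, smul_smul, ← pow_succ]

lemma aux_cmp {n : ℕ} (hn : 0 < n) (B : Matrix (Fin n) (Fin n) ℝ)
    (hB : ∀ i j, 0 < B i j) (v w : Fin n → ℝ) (hv : ∀ i, 0 < v i) (hw : ∀ i, 0 < w i)
    (lam th : ℝ) (hBv : B *ᵥ v = lam • v) (hBw : B *ᵥ w = th • w) :
    (∃ c : ℝ, w = c • v) ∨ lam < th := by
  obtain ⟨i0, -, hi0⟩ := Finset.exists_min_image Finset.univ (fun i => w i / v i)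
    ⟨⟨0, hn⟩, Finset.mem_univ _⟩
  set c := w i0 / v i0 with hc
  have hle : ∀ i, c * v i ≤ w i := by
    intro i
    have h1 := hi0 i (Finset.mem_univ i)
    calc c * v i ≤ (w i / v i) * v i := mul_le_mul_of_nonneg_right h1 (hv i).le
      _ = w i := div_mul_cancel₀ _ (ne_of_gt (hv i))
  have hci0 : c * v i0 = w i0 := div_mul_cancel₀ _ (ne_of_gt (hv i0))
  by_cases hall : ∀ i, w i = c * v i
  · exact Or.inl ⟨c, funext fun i => by simp [hall i]⟩
  · push_neg at hall
    obtain ⟨j, hj⟩ := hall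
    have hjlt : c * v j < w j := lt_of_le_of_ne (hle j) (fun h => hj h.symm)
    have hsum : 0 < ∑ k, B i0 k * (w k - c * v k) := by
      apply Finset.sum_pos'
      · intro k _; exact mul_nonneg (hB i0 k).le (by linarith [hle k])
      · exact ⟨j, Finset.mem_univ j, mul_pos (hB i0 j) (by linarith)⟩
    have h1 : ∑ k, B i0 k * w k = th * w i0 := by
      have := congrFun hBw i0
      simpa [Matrix.mulVec, dotProduct] using this
    have h2 : ∑ k, B i0 k * v k = lam * v i0 := by
      have := congrFun hBv i0
      simpa [Matrix.mulVec, dotProduct] using this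
    have hexp : ∑ k, B i0 k * (w k - c * v k) = (th - lam) * w i0 := by
      have : ∑ k, B i0 k * (w k - c * v k)
          = (∑ k, B i0 k * w k) - c * ∑ k, B i0 k * v k := by
        rw [Finset.mul_sum, ← Finset.sum_sub_distrib]
        congr 1; funext k; ring
      rw [this, h1, h2, ← hci0]; ring
    rw [hexp] at hsum
    right
    nlinarith [hw i0]

/-- Any strictly positive eigenvector of an eventually positive matrix is a scalar multiple
of the right Perron eigenvector associated with the spectral radius. -/
theorem stmt0 {n : ℕ} (A : Matrix (Fin n) (Fin n) ℝ) (hA : EvPos A)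
    (v : Fin n → ℝ) (hv : ∀ i, 0 < v i) (hAv : A *ᵥ v = specRad A • v)
    (w : Fin n → ℝ) (hw : ∀ i, 0 < w i) (μ : ℝ) (hAw : A *ᵥ w = μ • w) :
    ∃ c : ℝ, w = c • v := by
  rcases Nat.eq_zero_or_pos n with hn | hn
  · subst hn; exact ⟨1, funext fun i => i.elim0⟩
  obtain ⟨t0, ht0⟩ := hA
  have hB := ht0 t0 le_rfl
  have hBv := pow_eig A v (specRad A) hAv t0
  have hBw := pow_eig A w μ hAw t0
  rcases aux_cmp hn (A ^ t0) hB v w hv hw _ _ hBv hBw with h | h1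
  · exact h
  rcases aux_cmp hn (A ^ t0) hB w v hw hv _ _ hBw hBv with h | h2
  · obtain ⟨d, hd⟩ := h
    have hd0 : 0 < d := by
      have := congrFun hd ⟨0, hn⟩
      simp only [Pi.smul_apply, smul_eq_mul] at this
      nlinarith [hv ⟨0, hn⟩, hw ⟨0, hn⟩]
    refine ⟨d⁻¹, funext fun i => ?_⟩
    have := congrFun hd i
    simp only [Pi.smul_apply, smul_eq_mul] at this ⊢
    field_simp
    linarith [this]
  · linarith
end
end

section
/- Let L ∈ ℝ^{n×n} satisfy L·1 = 0. If the symmetric part L_s = (L+L^T)/2 is positive semidefinite with dim ker L_s = 1, then L is weight balanced (L^T·1 = 0), dim ker L = 1, and −L is marginally stable. -/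
open Matrix Filter Polynomial Topology

noncomputable section

section AuxLemmas
open scoped ComplexOrder
lemma cmat_posSemidef {n : ℕ} {S : Matrix (Fin n) (Fin n) ℝ} (h : S.PosSemidef) :
    (cmat S).PosSemidef := by
  open scoped MatrixOrder in
  obtain ⟨B, hB⟩ := CStarAlgebra.nonneg_iff_eq_star_mul_self.mp h.nonneg
  replace hB : S = Bᴴ * B := hB
  subst hB
  have key : cmat (Bᴴ * B) = (cmat B)ᴴ * (cmat B) := by
    unfold cmat
    rw [Matrix.map_mul]
    congr 1
    ext i j
    simp [Matrix.conjTranspose_apply, Matrix.map_apply, Complex.conj_ofReal]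
  rw [key]
  exact Matrix.posSemidef_conjTranspose_mul_self _

lemma cmat_transpose {n : ℕ} (A : Matrix (Fin n) (Fin n) ℝ) :
    (cmat A)ᴴ = cmat Aᵀ := by
  ext i j
  simp [cmat, Matrix.conjTranspose_apply, Matrix.map_apply, Complex.conj_ofReal]

lemma rootMultiplicity_minpoly_eq_one {n : ℕ} (M : Matrix (Fin n) (Fin n) ℂ) (μ : ℂ)
    (hμ : μ ∈ spectrum ℂ M)
    (h2 : ∀ w : Fin n → ℂ, M *ᵥ (M *ᵥ w - μ • w) = μ • (M *ᵥ w - μ • w) → M *ᵥ w = μ • w) :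
    rootMultiplicity μ (minpoly ℂ M) = 1 := by
  set f : Module.End ℂ (Fin n → ℂ) := Matrix.toLinAlgEquiv' M with hf
  have hmp : minpoly ℂ f = minpoly ℂ M := minpoly.algEquiv_eq Matrix.toLinAlgEquiv' M
  have hspec : μ ∈ spectrum ℂ f := by
    rwa [AlgEquiv.spectrum_eq Matrix.toLinAlgEquiv' M]
  have hev : f.HasEigenvalue μ := Module.End.hasEigenvalue_iff_mem_spectrum.mpr hspec
  have hroot : (minpoly ℂ f).IsRoot μ := Module.End.hasEigenvalue_iff_isRoot.mp hev
  have hint : IsIntegral ℂ f := Algebra.IsIntegral.isIntegral f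
  have hne : minpoly ℂ f ≠ 0 := minpoly.ne_zero hint
  rw [← hmp]
  by_contra hcon
  have h1 : 1 ≤ rootMultiplicity μ (minpoly ℂ f) :=
    (Polynomial.rootMultiplicity_pos hne).mpr hroot
  have h2' : 2 ≤ rootMultiplicity μ (minpoly ℂ f) := by omega
  have hdvd : (X - C μ) ^ 2 ∣ minpoly ℂ f :=
    dvd_trans (pow_dvd_pow _ h2') (Polynomial.pow_rootMultiplicity_dvd _ μ)
  obtain ⟨q, hq⟩ := hdvd
  have hmono : (minpoly ℂ f).Monic := minpoly.monic hint
  have hqm : q.Monic := by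
    have hXm : ((X - C μ) ^ 2).Monic := (monic_X_sub_C μ).pow 2
    exact hXm.of_mul_monic_left (hq ▸ hmono)
  have hrm : ((X - C μ) * q).Monic := (monic_X_sub_C μ).mul hqm
  have hr : Polynomial.aeval f ((X - C μ) * q) = 0 := by
    have hp0 : Polynomial.aeval f (minpoly ℂ f) = 0 := minpoly.aeval ℂ f
    rw [hq] at hp0
    refine LinearMap.ext fun x => ?_
    set u : Fin n → ℂ := Polynomial.aeval f q x with hu
    have happ : ∀ y : Fin n → ℂ, (Polynomial.aeval f (X - C μ)) y = M *ᵥ y - μ • y := by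
      intro y
      simp [hf, Polynomial.aeval_X, Polynomial.aeval_C, LinearMap.sub_apply,
        Matrix.toLinAlgEquiv'_apply, Module.algebraMap_end_apply]
    have hNNu : M *ᵥ (M *ᵥ u - μ • u) - μ • (M *ᵥ u - μ • u) = 0 := by
      have := congrFun (congrArg (fun g : Module.End ℂ (Fin n → ℂ) => (g : (Fin n → ℂ) → Fin n → ℂ)) hp0) x
      simp only [_root_.map_mul] at this
      calc M *ᵥ (M *ᵥ u - μ • u) - μ • (M *ᵥ u - μ • u)
          = (Polynomial.aeval f (X - C μ)) ((Polynomial.aeval f (X - C μ)) u) := by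
            rw [happ, happ]
        _ = 0 := by
            have h3 : (Polynomial.aeval f ((X - C μ) ^ 2 * q)) x = 0 := by rw [hp0]; rfl
            calc (Polynomial.aeval f (X - C μ)) ((Polynomial.aeval f (X - C μ)) u)
                = (Polynomial.aeval f ((X - C μ) ^ 2 * q)) x := by
                  simp [hu, _root_.map_mul, map_pow, pow_two, Module.End.mul_apply]
              _ = 0 := h3
    have := h2 u (by rw [sub_eq_zero] at hNNu; exact hNNu)
    simp only [_root_.map_mul, Module.End.mul_apply, LinearMap.zero_apply]
    rw [← hu, happ u, this, sub_self]

  have hminle := minpoly.min ℂ f hrm hr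
  have hdq : ((X - C μ) * q).natDegree < (minpoly ℂ f).natDegree := by
    have e1 : ((X - C μ) * q).natDegree = 1 + q.natDegree := by
      rw [(monic_X_sub_C μ).natDegree_mul hqm, natDegree_X_sub_C]
    have e2 : ((X - C μ) ^ 2 * q).natDegree = 2 + q.natDegree := by
      rw [((monic_X_sub_C μ).pow 2).natDegree_mul hqm, Polynomial.natDegree_pow,
        natDegree_X_sub_C]
    rw [hq, e1, e2]
    omega
  have : (minpoly ℂ f).degree ≤ ((X - C μ) * q).degree := hminle
  have hlt : ((X - C μ) * q).degree < (minpoly ℂ f).degree :=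
    Polynomial.degree_lt_degree hdq
  exact absurd this (not_le.mpr hlt)

lemma quadform_eq {n : ℕ} (L : Matrix (Fin n) (Fin n) ℝ) (μ : ℂ) (v : Fin n → ℂ)
    (hv : cmat L *ᵥ v = (-μ) • v) :
    star v ⬝ᵥ (cmat (((1 : ℝ) / 2) • (L + Lᵀ)) *ᵥ v) = -(μ.re : ℂ) * (star v ⬝ᵥ v) := by
  have hcL : cmat (((1 : ℝ) / 2) • (L + Lᵀ)) = ((1 : ℂ) / 2) • (cmat L + cmat Lᵀ) := by
    ext i j
    simp [cmat, Matrix.map_apply, Matrix.smul_apply, Matrix.add_apply]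
    ring
  have ht2 : star v ⬝ᵥ (cmat Lᵀ *ᵥ v) = star (cmat L *ᵥ v) ⬝ᵥ v := by
    rw [Matrix.dotProduct_mulVec, Matrix.star_mulVec, cmat_transpose]
  rw [hcL, Matrix.smul_mulVec, Matrix.add_mulVec, dotProduct_smul,
    dotProduct_add, ht2, hv]
  rw [star_smul, smul_dotProduct]
  have hconj : μ + (starRingEnd ℂ) μ = 2 * (μ.re : ℂ) := by
    have := Complex.add_conj μ
    push_cast at this
    exact this
  rw [dotProduct_smul]
  simp only [smul_eq_mul, star_neg, RCLike.star_def]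
  linear_combination (-(star v ⬝ᵥ v) / 2) * hconj

lemma marginal_aux (L : Matrix (Fin n) (Fin n) ℝ)
    (hpsd : (((1 : ℝ) / 2) • (L + Lᵀ)).PosSemidef) : MarginallyStable (-L) := by
  intro μ hμ
  have hML : cmat (-L) = -(cmat L) := by
    ext i j
    simp [cmat, Matrix.map_apply]
  have hpsdC := cmat_posSemidef hpsd
  have hspec : μ ∈ spectrum ℂ (Matrix.toLinAlgEquiv' (cmat (-L))) := by
    rwa [AlgEquiv.spectrum_eq Matrix.toLinAlgEquiv' (cmat (-L))]
  have hev : Module.End.HasEigenvalue (Matrix.toLinAlgEquiv' (cmat (-L))) μ :=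
    Module.End.hasEigenvalue_iff_mem_spectrum.mpr hspec
  obtain ⟨v, hv⟩ := hev.exists_hasEigenvector
  have hMv : cmat (-L) *ᵥ v = μ • v := by
    have := hv.apply_eq_smul
    simpa [Matrix.toLinAlgEquiv'_apply] using this
  have hLv : cmat L *ᵥ v = (-μ) • v := by
    have h : -(cmat L *ᵥ v) = μ • v := by rw [← Matrix.neg_mulVec, ← hML, hMv]
    rw [← neg_neg (cmat L *ᵥ v), h, neg_smul]
  have hquad := quadform_eq L μ v hLv
  have hvnz : star v ⬝ᵥ v ≠ 0 := fun h => hv.2 (dotProduct_star_self_eq_zero.mp h)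
  have hvpos : (0 : ℂ) < star v ⬝ᵥ v :=
    lt_of_le_of_ne (dotProduct_star_self_nonneg v) (Ne.symm hvnz)
  constructor
  · -- re μ ≤ 0
    have hnn : (0 : ℂ) ≤ star v ⬝ᵥ (cmat (((1 : ℝ) / 2) • (L + Lᵀ)) *ᵥ v) := hpsdC.dotProduct_mulVec_nonneg v
    rw [hquad] at hnn
    by_contra hlt
    push_neg at hlt
    have hneg : -(μ.re : ℂ) * (star v ⬝ᵥ v) < 0 := by
      apply mul_neg_of_neg_of_pos _ hvpos
      rw [neg_lt_zero]
      exact_mod_cast hlt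
    exact absurd hnn hneg.not_ge
  · -- semisimplicity
    intro hre
    apply rootMultiplicity_minpoly_eq_one _ _ hμ
    intro w hw
    set u : Fin n → ℂ := cmat (-L) *ᵥ w - μ • w with hu
    by_contra hne
    have hunz : u ≠ 0 := fun h => hne (by rw [← sub_eq_zero]; exact h)
    have hMu : cmat (-L) *ᵥ u = μ • u := hw
    have hLu : cmat L *ᵥ u = (-μ) • u := by
      have h : -(cmat L *ᵥ u) = μ • u := by rw [← Matrix.neg_mulVec, ← hML, hMu]
      rw [← neg_neg (cmat L *ᵥ u), h, neg_smul]
    have hquadu := quadform_eq L μ u hLu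
    rw [hre] at hquadu
    simp only [Complex.ofReal_zero, neg_zero, zero_mul] at hquadu
    have hLsu : cmat (((1 : ℝ) / 2) • (L + Lᵀ)) *ᵥ u = 0 :=
      (hpsdC.dotProduct_mulVec_zero_iff u).mp hquadu
    have hcL : cmat (((1 : ℝ) / 2) • (L + Lᵀ)) = ((1 : ℂ) / 2) • (cmat L + cmat Lᵀ) := by
      ext i j
      simp [cmat, Matrix.map_apply, Matrix.smul_apply, Matrix.add_apply]
      ring
    have hLtu : cmat Lᵀ *ᵥ u = μ • u := by
      rw [hcL, Matrix.smul_mulVec, Matrix.add_mulVec, hLu] at hLsu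
      rcases smul_eq_zero.mp hLsu with h | h
      · norm_num at h
      · have h' := eq_neg_of_add_eq_zero_right h
        rw [h', neg_smul, neg_neg]
    have hconjμ : (starRingEnd ℂ) μ = -μ := by
      apply Complex.ext <;> simp [hre]
    have hLw : cmat L *ᵥ w = -(u + μ • w) := by
      have e : cmat (-L) *ᵥ w = u + μ • w := by rw [hu]; abel
      have e2 : cmat (-L) *ᵥ w = -(cmat L *ᵥ w) := by rw [hML, Matrix.neg_mulVec]
      have := e2.symm.trans e
      exact neg_eq_iff_eq_neg.mp this
    have lhs1 : star u ⬝ᵥ (cmat L *ᵥ w)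
        = -((star u ⬝ᵥ u) + μ * (star u ⬝ᵥ w)) := by
      rw [hLw]
      simp [dotProduct_neg, dotProduct_add, dotProduct_smul]
    have lhs2 : star u ⬝ᵥ (cmat L *ᵥ w) = -μ * (star u ⬝ᵥ w) := by
      rw [Matrix.dotProduct_mulVec]
      have hvm : star u ᵥ* cmat L = (-μ) • star u := by
        have h1 : star (cmat Lᵀ *ᵥ u) = star u ᵥ* cmat L := by
          rw [Matrix.star_mulVec, cmat_transpose, Matrix.transpose_transpose]
        rw [← h1, hLtu, star_smul, RCLike.star_def, hconjμ]
      rw [hvm, smul_dotProduct, smul_eq_mul]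
    have hs0 : (star u ⬝ᵥ u) = 0 := by
      have heq := lhs1.symm.trans lhs2
      linear_combination -heq
    exact hunz (dotProduct_star_self_eq_zero.mp hs0)

end AuxLemmas

/-- If the symmetric part of `L` is psd with one-dimensional kernel, then `L` is weight
balanced, `ker L` is one-dimensional, and `-L` is marginally stable. -/
theorem stmt9 {n : ℕ} (L : Matrix (Fin n) (Fin n) ℝ) (hL : L *ᵥ ones n = 0)
    (hpsd : (((1 : ℝ) / 2) • (L + Lᵀ)).PosSemidef)
    (hcor : Module.finrank ℝ (LinearMap.ker (((1 : ℝ) / 2) • (L + Lᵀ)).mulVecLin) = 1) :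
    Lᵀ *ᵥ ones n = 0 ∧ Module.finrank ℝ (LinearMap.ker L.mulVecLin) = 1 ∧
      MarginallyStable (-L) := by
  have hhalf : ∀ x : Fin n → ℝ, (((1 : ℝ) / 2) • (L + Lᵀ)) *ᵥ x
      = ((1 : ℝ) / 2) • (L *ᵥ x + Lᵀ *ᵥ x) := by
    intro x
    rw [Matrix.smul_mulVec, Matrix.add_mulVec]
  have hdot : ones n ⬝ᵥ ((((1 : ℝ) / 2) • (L + Lᵀ)) *ᵥ ones n) = 0 := by
    rw [hhalf, hL, zero_add, dotProduct_smul, Matrix.dotProduct_mulVec,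
      Matrix.vecMul_transpose, hL, zero_dotProduct, smul_zero]
  have hLs1 : (((1 : ℝ) / 2) • (L + Lᵀ)) *ᵥ ones n = 0 :=
    (hpsd.dotProduct_mulVec_zero_iff (ones n)).mp (by simpa using hdot)
  have hLt1 : Lᵀ *ᵥ ones n = 0 := by
    rw [hhalf, hL, zero_add] at hLs1
    rcases smul_eq_zero.mp hLs1 with h | h
    · norm_num at h
    · exact h
  refine ⟨hLt1, ?_, marginal_aux L hpsd⟩
  have hker_le : LinearMap.ker L.mulVecLin
      ≤ LinearMap.ker (((1 : ℝ) / 2) • (L + Lᵀ)).mulVecLin := by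
    intro x hx
    simp only [LinearMap.mem_ker, Matrix.mulVecLin_apply] at hx ⊢
    have hxq : x ⬝ᵥ ((((1 : ℝ) / 2) • (L + Lᵀ)) *ᵥ x) = 0 := by
      rw [hhalf, hx, zero_add, dotProduct_smul, Matrix.dotProduct_mulVec,
        Matrix.vecMul_transpose, hx, zero_dotProduct, smul_zero]
    exact (hpsd.dotProduct_mulVec_zero_iff x).mp (by simpa using hxq)
  have hn : 0 < n := by
    by_contra h
    push_neg at h
    have h0 : n = 0 := by omega
    have hle := Submodule.finrank_le (LinearMap.ker (((1 : ℝ) / 2) • (L + Lᵀ)).mulVecLin)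
    rw [hcor] at hle
    subst h0
    simp at hle
  have hones : ones n ≠ 0 := by
    intro h
    have := congrFun h ⟨0, hn⟩
    simp [ones] at this
  have hspan : Submodule.span ℝ {ones n} ≤ LinearMap.ker L.mulVecLin := by
    rw [Submodule.span_le, Set.singleton_subset_iff]
    simp only [SetLike.mem_coe, LinearMap.mem_ker, Matrix.mulVecLin_apply]
    exact hL
  have h1le : 1 ≤ Module.finrank ℝ (LinearMap.ker L.mulVecLin) := by
    have := Submodule.finrank_mono hspan
    rwa [finrank_span_singleton hones] at this
  have hle1 : Module.finrank ℝ (LinearMap.ker L.mulVecLin) ≤ 1 := by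
    have := Submodule.finrank_mono hker_le
    rwa [hcor] at this
  omega
end
end

section
/- If L ∈ ℝ^{n×n} with L·1 = 0 is such that −L is eventually exponentially positive, then L is irreducible (there is no permutation matrix P such that P^T L P is block upper triangular with nontrivial square diagonal blocks). -/
open Matrix Filter Polynomial Topology

noncomputable section

/-- Powers preserve a zero block. -/
lemma pow_block_zero {n : ℕ} (A : Matrix (Fin n) (Fin n) ℝ) (S : Finset (Fin n))
    (h : ∀ i ∈ S, ∀ j ∉ S, A i j = 0) (k : ℕ) :
    ∀ i ∈ S, ∀ j ∉ S, (A ^ k) i j = 0 := by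
  induction k with
  | zero =>
    intro i hi j hj
    have hij : i ≠ j := fun e => hj (e ▸ hi)
    simp [Matrix.one_apply, hij]
  | succ k ih =>
    intro i hi j hj
    rw [pow_succ, Matrix.mul_apply]
    apply Finset.sum_eq_zero
    intro m _
    by_cases hm : m ∈ S
    · rw [h m hm j hj, mul_zero]
    · rw [ih i hi m hm, zero_mul]

/-- If `-L` is eventually exponentially positive (with `L·1 = 0`), then `L` is irreducible. -/
theorem stmt10 {n : ℕ} (L : Matrix (Fin n) (Fin n) ℝ)
    (hL : L *ᵥ ones n = 0) (hEEP : EvExpPos (-L)) :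
    MatIrreducible L := by
  rintro ⟨S, ⟨i, hi⟩, hSne, hS⟩
  obtain ⟨j, hj⟩ : ∃ j, j ∉ S := by
    by_contra h
    push_neg at h
    exact hSne (Finset.eq_univ_iff_forall.2 h)
  obtain ⟨t0, ht0, hpos⟩ := hEEP
  have hposij := hpos t0 le_rfl i j
  set A : Matrix (Fin n) (Fin n) ℝ := t0 • (-L) with hA
  have hAblock : ∀ i ∈ S, ∀ j ∉ S, A i j = 0 := by
    intro i hi j hj
    simp [hA, Matrix.smul_apply, Matrix.neg_apply, hS i hi j hj]
  letI : NormedRing (Matrix (Fin n) (Fin n) ℝ) := Matrix.linftyOpNormedRing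
  letI : NormedAlgebra ℝ (Matrix (Fin n) (Fin n) ℝ) := Matrix.linftyOpNormedAlgebra
  have hsum : Summable (fun k : ℕ => (k.factorial : ℝ)⁻¹ • A ^ k) :=
    NormedSpace.expSeries_summable' (𝕂 := ℝ) A
  have hexp : NormedSpace.exp A = ∑' k : ℕ, (k.factorial : ℝ)⁻¹ • A ^ k :=
    by rw [NormedSpace.exp_eq_tsum (𝕂 := ℝ)]
  have hentry : (NormedSpace.exp A) i j = 0 := by
    rw [hexp]
    have h1 : (∑' k : ℕ, (k.factorial : ℝ)⁻¹ • A ^ k) i j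
        = ∑' k : ℕ, ((k.factorial : ℝ)⁻¹ • A ^ k) i j := by
      have hs1 : Summable (fun k : ℕ => ((k.factorial : ℝ)⁻¹ • A ^ k) i) := by
        exact (Pi.summable.mp hsum) i
      exact (congrFun (tsum_apply hsum (x := i)) j).trans (tsum_apply hs1 (x := j))
    rw [h1]
    have hz : (fun k : ℕ => ((k.factorial : ℝ)⁻¹ • A ^ k) i j) = fun _ => 0 := by
      funext k
      simp [Matrix.smul_apply, pow_block_zero A S hAblock k i hi j hj]
    rw [hz, tsum_zero]
  rw [hentry] at hposij
  exact lt_irrefl 0 hposij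
end
end

section
/- If L ∈ ℝ^{n×n}, n ≥ 2, is weight balanced (L·1 = L^T·1 = 0) with dim ker L = 1, then L is irreducible. -/
open Matrix Filter Polynomial Topology

noncomputable section

/-- A weight balanced Laplacian with one-dimensional kernel is irreducible. -/
theorem stmt11 {n : ℕ} (hn : 2 ≤ n) (L : Matrix (Fin n) (Fin n) ℝ)
    (h1 : L *ᵥ ones n = 0) (h2 : Lᵀ *ᵥ ones n = 0)
    (hcor : Module.finrank ℝ (LinearMap.ker L.mulVecLin) = 1) :
    MatIrreducible L := by
  classical
  rintro ⟨S, hSne, hSuniv, h0⟩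
  obtain ⟨i0, hi0⟩ := hSne
  obtain ⟨j0, hj0⟩ : ∃ j, j ∉ S := by
    by_contra h; push_neg at h; exact hSuniv (Finset.eq_univ_iff_forall.mpr h)
  set T := {i : Fin n // i ∉ S}
  let C : Matrix T T ℝ := fun i j => L i.1 j.1
  -- column sums of C vanish
  have hCcol : Cᵀ *ᵥ (fun _ => (1:ℝ)) = 0 := by
    funext j
    have hfull : ∑ i : Fin n, L i j.1 * 1 = 0 := by
      have := congrFun h2 j.1
      simpa [mulVec, dotProduct, transpose, ones] using this
    have hsplit : ∑ i ∈ S, L i j.1 + ∑ i ∈ Sᶜ, L i j.1 = ∑ i : Fin n, L i j.1 :=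
      Finset.sum_add_sum_compl S _
    have hS0 : ∑ i ∈ S, L i j.1 = 0 :=
      Finset.sum_eq_zero fun i hi => h0 i hi j.1 j.2
    have hcomp : ∑ i ∈ Sᶜ, L i j.1 = 0 := by
      simp only [hS0, zero_add] at hsplit
      rw [hsplit]
      simpa using hfull
    have hsub : ∑ i : T, L i.1 j.1 = ∑ i ∈ Sᶜ, L i j.1 := by
      exact (Finset.sum_subtype Sᶜ (fun i => Finset.mem_compl) (fun i => L i j.1)).symm
    simp only [mulVec, dotProduct, transpose, Pi.zero_apply]
    simpa [C, mul_one] using hsub.trans hcomp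
  -- kernel of C is trivial
  have hker : ∀ z : T → ℝ, C *ᵥ z = 0 → z = 0 := by
    intro z hz
    by_contra hz0
    obtain ⟨k, hk⟩ : ∃ k, z k ≠ 0 := by
      by_contra h; push_neg at h; exact hz0 (funext h)
    set x : Fin n → ℝ := fun i => if h : i ∈ S then 0 else z ⟨i, h⟩ with hxdef
    have hx : L *ᵥ x = 0 := by
      funext i
      have hsplit : ∑ j ∈ S, L i j * x j + ∑ j ∈ Sᶜ, L i j * x j
          = ∑ j : Fin n, L i j * x j := Finset.sum_add_sum_compl S _
      have hS0 : ∑ j ∈ S, L i j * x j = 0 :=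
        Finset.sum_eq_zero fun j hj => by simp [hxdef, hj]
      have hsub : ∑ j ∈ Sᶜ, L i j * x j = ∑ j : T, L i j.1 * z j := by
        rw [Finset.sum_subtype Sᶜ (fun j => Finset.mem_compl) (fun j => L i j * x j)]
        exact Finset.sum_congr rfl fun j _ => by simp [hxdef, j.2]
      by_cases hi : i ∈ S
      · have : ∑ j : Fin n, L i j * x j = 0 := by
          rw [← hsplit, hS0, zero_add, hsub]
          exact Finset.sum_eq_zero fun j _ => by simp [h0 i hi j.1 j.2]
        simpa [mulVec, dotProduct] using this
      · have hCz := congrFun hz ⟨i, hi⟩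
        have : ∑ j : Fin n, L i j * x j = 0 := by
          rw [← hsplit, hS0, zero_add, hsub]
          simpa [C, mulVec, dotProduct] using hCz
        simpa [mulVec, dotProduct] using this
    -- two independent kernel vectors
    have hones : ones n ∈ LinearMap.ker L.mulVecLin := by
      simpa [Matrix.mulVecLin_apply] using h1
    have hxmem : x ∈ LinearMap.ker L.mulVecLin := by
      simpa [Matrix.mulVecLin_apply] using hx
    have hli : LinearIndependent ℝ
        ![(⟨ones n, hones⟩ : LinearMap.ker L.mulVecLin), ⟨x, hxmem⟩] := by
      rw [LinearIndependent.pair_iff]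
      intro s t hst
      have hval := congrArg (Subtype.val (p := fun v => v ∈ LinearMap.ker L.mulVecLin)) hst
      simp only [Submodule.coe_add, SetLike.val_smul, ZeroMemClass.coe_zero] at hval
      have hst' : ∀ i : Fin n, s * ones n i + t * x i = 0 := by
        intro i
        have := congrFun hval i
        simpa using this
      have hs : s = 0 := by
        have := hst' i0
        simpa [ones, hxdef, hi0] using this
      have ht : t = 0 := by
        have := hst' k.1
        rw [hs] at this
        simp only [zero_mul, zero_add] at this
        have hxk : x k.1 = z k := by simp [hxdef, k.2]
        rw [hxk] at this
        rcases mul_eq_zero.mp this with h | h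
        · exact h
        · exact absurd h hk
      exact ⟨hs, ht⟩
    have := hli.fintype_card_le_finrank
    rw [hcor] at this
    simp at this
  -- hence C is injective, so its rank is full
  have hkerbot : LinearMap.ker C.mulVecLin = ⊥ := by
    rw [LinearMap.ker_eq_bot']
    intro z hz
    exact hker z (by simpa [Matrix.mulVecLin_apply] using hz)
  have hrankC : C.rank = Fintype.card T := by
    have := LinearMap.finrank_range_add_finrank_ker C.mulVecLin
    rw [hkerbot] at this
    simpa [Matrix.rank, Module.finrank_pi] using this
  have hrankCT : Cᵀ.rank = Fintype.card T := by rw [Matrix.rank_transpose, hrankC]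
  have hkerCT : LinearMap.ker Cᵀ.mulVecLin = ⊥ := by
    have := LinearMap.finrank_range_add_finrank_ker Cᵀ.mulVecLin
    rw [show Module.finrank ℝ (LinearMap.range Cᵀ.mulVecLin) = Cᵀ.rank from rfl] at this
    rw [hrankCT, Module.finrank_pi] at this
    have h0' : Module.finrank ℝ (LinearMap.ker Cᵀ.mulVecLin) = 0 := by omega
    exact Submodule.finrank_eq_zero.mp h0'
  have : (fun _ : T => (1:ℝ)) ∈ LinearMap.ker Cᵀ.mulVecLin := by
    rw [LinearMap.mem_ker, Matrix.mulVecLin_apply]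
    exact hCcol
  rw [hkerCT] at this
  have := congrFun (Submodule.mem_bot _ |>.mp this) ⟨j0, hj0⟩
  simpa using this
end
end
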